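/- For every a ∈ F one has |W_f(a)| ≤ 3·2^m; consequently the nonlinearity of f satisfies 2^(n−1) − (1/2)·max_{a ∈ F} |W_f(a)| ≥ 2^(n−1) − 3·2^(m−1). -/

import Mathlib

open Finset

/-- Absolute trace-style sum `Tr_n : F → F` for `n = 2m`. -/
def trN (m : ℕ) {F : Type*} [Field F] (x : F) : F :=
  ∑ i ∈ Finset.range (2 * m), x ^ (2 ^ i)

/-- Trace-style sum `Tr_m : F → F` (meant for elements of the subfield `K`). -/
def trM (m : ℕ) {F : Type*} [Field F] (x : F) : F :=
  ∑ i ∈ Finset.range m, x ^ (2 ^ i)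

/-- `ε(0) = 1`, `ε(t) = -1` for `t ≠ 0`. -/
def eps {F : Type*} [Field F] [DecidableEq F] (t : F) : ℤ :=
  if t = 0 then 1 else -1

/-- Kloosterman sum `k_m(μ) = ∑_{x ∈ K, x ≠ 0} χ_m(x + μ x⁻¹)`. -/
def klooM (m : ℕ) {F : Type*} [Field F] [Fintype F] [DecidableEq F] (μ : F) : ℤ :=
  ∑ x ∈ Finset.univ.filter (fun x : F => x ^ (2 ^ m) = x ∧ x ≠ 0),
    eps (trM m (x + μ * x⁻¹))

/-- Kloosterman sum over the big field: `k_n(μ) = ∑_{x ∈ F, x ≠ 0} χ_n(x + μ x⁻¹)`. -/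
def klooN (m : ℕ) {F : Type*} [Field F] [Fintype F] [DecidableEq F] (μ : F) : ℤ :=
  ∑ x ∈ Finset.univ.filter (fun x : F => x ≠ 0), eps (trN m (x + μ * x⁻¹))

/-- Walsh transform of `h : F → F` (with values in `{0,1}`) at `a`. -/
def walsh (m : ℕ) {F : Type*} [Field F] [Fintype F] [DecidableEq F] (h : F → F) (a : F) : ℤ :=
  ∑ x : F, eps (h x + trN m (a * x))

/-- The Boolean function `f_{λ,μ}(x) = Tr_n(λ x^{2^m+1}) + Tr_n(x)·Tr_n(μ x^{2^m-1})`. -/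
def fFun (m : ℕ) {F : Type*} [Field F] (l μ : F) : F → F :=
  fun x => trN m (l * x ^ (2 ^ m + 1)) + trN m x * trN m (μ * x ^ (2 ^ m - 1))

/-- The Boolean function
`g_{λ,μ}(x) = (1 + Tr_n(x))·Tr_n(λ x^{2^m+1}) + Tr_n(x)·Tr_n(μ x^{2^m-1})`. -/
def gFun (m : ℕ) {F : Type*} [Field F] (l μ : F) : F → F :=
  fun x => (1 + trN m x) * trN m (l * x ^ (2 ^ m + 1)) +
    trN m x * trN m (μ * x ^ (2 ^ m - 1))


open Polynomial


open Finset Polynomial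

section Aux
variable {F : Type*} [Field F] [Fintype F] [DecidableEq F]

lemma charF {m : ℕ} (hm : 0 < m) (hcard : Fintype.card F = 2 ^ (2*m)) : CharP F 2 := by
  have h2 : (2 : F) ^ (2*m) = 0 := by
    have := FiniteField.cast_card_eq_zero F
    rw [hcard] at this; push_cast at this; exact this
  have h20 : (2 : F) = 0 := pow_eq_zero_iff (by omega) |>.mp h2
  have hp : (ringChar F).Prime := CharP.char_is_prime F (ringChar F)
  have : ringChar F ∣ 2 := by
    rw [← ringChar.spec F 2]
    exact_mod_cast h20
  have : ringChar F = 2 := ((Nat.prime_dvd_prime_iff_eq hp Nat.prime_two).mp this)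
  exact this ▸ ringChar.charP F
end Aux

set_option linter.unusedSectionVars false


section Tr
variable {F : Type*} [Field F] [Fintype F] [DecidableEq F] [CharP F 2] {m : ℕ}

lemma trN_add (x y : F) : trN m (x+y) = trN m x + trN m y := by
  unfold trN; rw [← Finset.sum_add_distrib]
  exact Finset.sum_congr rfl fun i _ => add_pow_char_pow ..

lemma trM_add (x y : F) : trM m (x+y) = trM m x + trM m y := by
  unfold trM; rw [← Finset.sum_add_distrib]
  exact Finset.sum_congr rfl fun i _ => add_pow_char_pow ..

lemma trN_zero : trN m (0:F) = 0 := by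
  unfold trN; simp

lemma trM_zero : trM m (0:F) = 0 := by
  unfold trM; simp

lemma sq_sum {s : Finset ℕ} (f : ℕ → F) : (∑ i ∈ s, f i)^2 = ∑ i ∈ s, (f i)^2 := by
  exact sum_pow_char 2 s f

lemma trN_sq (x : F) : (trN m x)^2 = trN m (x^2) := by
  unfold trN; rw [sq_sum]
  refine Finset.sum_congr rfl fun i _ => ?_
  rw [← pow_mul, ← pow_mul, mul_comm]

lemma trM_sq (x : F) : (trM m x)^2 = trM m (x^2) := by
  unfold trM; rw [sq_sum]
  refine Finset.sum_congr rfl fun i _ => ?_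
  rw [← pow_mul, ← pow_mul, mul_comm]

lemma two_zero : (2:F) = 0 := by exact_mod_cast CharP.cast_eq_zero F 2

lemma add_self (x : F) : x + x = 0 := by
  have : (2:F) * x = 0 := by rw [two_zero]; ring
  linear_combination this

lemma trN_frob (hmc : ∀ x : F, x ^ (2^(2*m)) = x) (x : F) : trN m (x^2) = trN m x := by
  have h1 : trN m (x^2) + x^(2^0) = trN m x + x^(2^(2*m)) := by
    unfold trN
    have : ∀ i, (x^2)^(2^i) = x^(2^(i+1)) := by
      intro i; rw [← pow_mul, pow_succ, mul_comm 2]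
    simp_rw [this]
    rw [← Finset.sum_range_succ' (fun i => x ^ (2^i)) (2*m), Finset.sum_range_succ]
  rw [hmc, pow_zero, pow_one] at h1
  exact add_right_cancel h1

lemma trM_frob (x : F) (hx : x^(2^m) = x) : trM m (x^2) = trM m x := by
  have h1 : trM m (x^2) + x^(2^0) = trM m x + x^(2^m) := by
    unfold trM
    have : ∀ i, (x^2)^(2^i) = x^(2^(i+1)) := by
      intro i; rw [← pow_mul, pow_succ, mul_comm 2]
    simp_rw [this]
    rw [← Finset.sum_range_succ' (fun i => x ^ (2^i)) m, Finset.sum_range_succ]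
  rw [hx, pow_zero, pow_one] at h1
  exact add_right_cancel h1

lemma zero_or_one_of_sq {t : F} (h : t^2 = t) : t = 0 ∨ t = 1 := by
  have : t * (t - 1) = 0 := by linear_combination h
  rcases mul_eq_zero.mp this with h | h
  · exact Or.inl h
  · exact Or.inr (by linear_combination h)

lemma trN01 (hmc : ∀ x : F, x ^ (2^(2*m)) = x) (x : F) : trN m x = 0 ∨ trN m x = 1 :=
  zero_or_one_of_sq (by rw [trN_sq, trN_frob hmc])

lemma trM01 (x : F) (hx : x^(2^m) = x) : trM m x = 0 ∨ trM m x = 1 :=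
  zero_or_one_of_sq (by rw [trM_sq, trM_frob x hx])

lemma trN_eq_trM (x : F) : trN m x = trM m (x + x^(2^m)) := by
  rw [trM_add]
  unfold trN trM
  rw [two_mul, Finset.sum_range_add]
  congr 1
  refine Finset.sum_congr rfl fun i _ => ?_
  rw [← pow_mul, ← pow_add, add_comm m i]
end Tr

section K
variable {F : Type*} [Field F] [Fintype F] [DecidableEq F] [CharP F 2] {m : ℕ}

lemma eq_of_add_eq_zero' {x y : F} (h : x + y = 0) : x = y := by
  have := add_self (F := F) y
  linear_combination h - this

lemma sq_inj {x y : F} (h : x^2 = y^2) : x = y := by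
  apply eq_of_add_eq_zero'
  have h2 : (x+y)^2 = x^2 + y^2 := add_pow_char ..
  have : (x+y)^2 = 0 := by rw [h2]; linear_combination h + add_self (y^2)
  exact pow_eq_zero_iff (by norm_num) |>.mp this

lemma bar_add (x y : F) : (x+y)^(2^m) = x^(2^m) + y^(2^m) := add_pow_char_pow ..

lemma pow_comm' (z : F) (i j : ℕ) : (z^i)^j = (z^j)^i := by
  rw [← pow_mul, Nat.mul_comm, pow_mul]

lemma cardK_le (hm : 0 < m) :
    ((univ : Finset F).filter (fun y => y^(2^m) = y)).card ≤ 2^m := by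
  set P : F[X] := X^(2^m) + X with hP
  have h1m : (1:ℕ) < 2^m := Nat.one_lt_two_pow hm.ne'
  have hP0 : P ≠ 0 := by
    intro h
    have : P.coeff 1 = 1 := by
      rw [hP]
      simp only [Polynomial.coeff_add, Polynomial.coeff_X_pow, Polynomial.coeff_X_one]
      rw [if_neg (fun hh => h1m.ne' hh.symm)]
      ring
    rw [h] at this; simp at this
  have hdeg : P.natDegree ≤ 2^m := by
    refine le_trans (Polynomial.natDegree_add_le _ _) ?_
    simp [Polynomial.natDegree_X_pow]
    exact Nat.one_le_two_pow
  have hsub : (univ : Finset F).filter (fun y => y^(2^m) = y) ⊆ P.roots.toFinset := by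
    intro y hy
    rw [Finset.mem_filter] at hy
    rw [Multiset.mem_toFinset, Polynomial.mem_roots hP0]
    show Polynomial.eval y P = 0
    rw [hP]; simp [hy.2, add_self]
  calc _ ≤ P.roots.toFinset.card := Finset.card_le_card hsub
    _ ≤ Multiset.card P.roots := Multiset.toFinset_card_le _
    _ ≤ P.natDegree := P.card_roots' 
    _ ≤ 2^m := hdeg

lemma cardK (hm : 0 < m) (hcard : Fintype.card F = 2 ^ (2*m))
    (hmc : ∀ x : F, x ^ (2^(2*m)) = x) :
    ((univ : Finset F).filter (fun y => y^(2^m) = y)).card = 2^m := by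
  set Kf := (univ : Finset F).filter (fun y : F => y^(2^m) = y) with hKf
  set φ : F → F := fun x => x^(2^m) + x with hφ
  have himg : (univ : Finset F).image φ ⊆ Kf := by
    intro z hz
    rw [Finset.mem_image] at hz
    obtain ⟨x, -, rfl⟩ := hz
    rw [hKf, Finset.mem_filter]
    refine ⟨Finset.mem_univ _, ?_⟩
    rw [hφ]
    show ((x^(2^m) + x))^(2^m) = _
    rw [bar_add, ← pow_mul, ← pow_add]
    rw [show m + m = 2*m by ring, hmc, add_comm]
  have hfib : ∀ z ∈ (univ : Finset F).image φ,
      ((univ : Finset F).filter (fun x => φ x = z)).card ≤ Kf.card := by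
    intro z hz
    rw [Finset.mem_image] at hz
    obtain ⟨x0, -, hx0⟩ := hz
    apply Finset.card_le_card_of_injOn (fun x => x + x0)
    · intro x hx
      rw [Finset.mem_coe, Finset.mem_filter] at hx
      rw [hKf, Finset.mem_coe, Finset.mem_filter]
      refine ⟨Finset.mem_univ _, ?_⟩
      rw [bar_add]
      apply Eq.symm
      apply eq_of_add_eq_zero'
      have : φ x + φ x0 = 0 := by rw [hx.2, hx0, add_self]
      rw [hφ] at this; simp only at this
      linear_combination this
    · intro a _ b _ h
      exact add_right_cancel h
  have hcount := Finset.card_eq_sum_card_image φ (univ : Finset F)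
  have hle : (univ : Finset F).card ≤ Kf.card * Kf.card := by
    rw [hcount]
    calc ∑ z ∈ (univ : Finset F).image φ, ((univ : Finset F).filter (fun x => φ x = z)).card
        ≤ ∑ _z ∈ (univ : Finset F).image φ, Kf.card := Finset.sum_le_sum hfib
      _ = ((univ : Finset F).image φ).card * Kf.card := by rw [Finset.sum_const, smul_eq_mul]
      _ ≤ Kf.card * Kf.card := by
          exact Nat.mul_le_mul_right _ (Finset.card_le_card himg)
  rw [Finset.card_univ, hcard] at hle
  have h1 : Kf.card ≤ 2^m := cardK_le hm
  have h2m : (2:ℕ)^(2*m) = 2^m * 2^m := by rw [two_mul, pow_add]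
  rw [h2m] at hle
  nlinarith
end K

section Char
variable {F : Type*} [Field F] [Fintype F] [DecidableEq F] [CharP F 2] {m : ℕ}


lemma eps_zero : eps (0:F) = 1 := if_pos rfl

lemma one_add_one : (1:F) + 1 = 0 := add_self 1

lemma eps_mul {s t : F} (hs : s = 0 ∨ s = 1) (ht : t = 0 ∨ t = 1) :
    eps (s + t) = eps s * eps t := by
  have h10 : (1:F) ≠ 0 := one_ne_zero
  rcases hs with rfl | rfl <;> rcases ht with rfl | rfl <;>
    simp [eps, one_add_one, h10]

lemma trM_exists_one (hm : 0 < m) (hcard : Fintype.card F = 2 ^ (2*m))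
    (hmc : ∀ x : F, x ^ (2^(2*m)) = x) :
    ∃ y : F, y^(2^m) = y ∧ trM m y = 1 := by
  by_contra hc
  push_neg at hc
  have hall : ∀ y : F, y^(2^m) = y → trM m y = 0 := by
    intro y hy
    rcases trM01 y hy with h | h
    · exact h
    · exact absurd h (hc y hy)
  set P : F[X] := ∑ i ∈ Finset.range m, X^(2^i) with hP
  have hP0 : P ≠ 0 := by
    intro h
    have hco : P.coeff 1 = 1 := by
      rw [hP, Polynomial.finset_sum_coeff]
      rw [Finset.sum_eq_single_of_mem 0 (Finset.mem_range.mpr hm)]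
      · simp
      · intro i hi hi0
        rw [Polynomial.coeff_X_pow]
        rw [if_neg]
        intro hh
        exact hi0 (by
          have := Nat.one_lt_two_pow hi0
          omega)
    rw [h] at hco; simp at hco
  have hdeg : P.natDegree ≤ 2^(m-1) := by
    rw [hP]
    apply Polynomial.natDegree_sum_le_of_forall_le
    intro i hi
    rw [Finset.mem_range] at hi
    rw [Polynomial.natDegree_X_pow]
    exact Nat.pow_le_pow_right (by norm_num) (by omega)
  have hsub : (univ : Finset F).filter (fun y => y^(2^m) = y) ⊆ P.roots.toFinset := by
    intro y hy
    rw [Finset.mem_filter] at hy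
    rw [Multiset.mem_toFinset, Polynomial.mem_roots hP0]
    show Polynomial.eval y P = 0
    have := hall y hy.2
    rw [hP]
    rw [Polynomial.eval_finset_sum]
    simpa [trM] using this
  have hK := cardK hm hcard hmc
  have : (2:ℕ)^m ≤ 2^(m-1) := by
    calc (2:ℕ)^m = _ := hK.symm
      _ ≤ P.roots.toFinset.card := Finset.card_le_card hsub
      _ ≤ Multiset.card P.roots := Multiset.toFinset_card_le _
      _ ≤ P.natDegree := P.card_roots'
      _ ≤ 2^(m-1) := hdeg
  have : (2:ℕ)^(m-1) < 2^m := Nat.pow_lt_pow_right (by norm_num) (by omega)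
  omega

lemma sum_eps_K (hm : 0 < m) (hcard : Fintype.card F = 2 ^ (2*m))
    (hmc : ∀ x : F, x ^ (2^(2*m)) = x) (b : F) (hb : b^(2^m) = b) :
    ∑ y ∈ (univ : Finset F).filter (fun y => y^(2^m) = y), eps (trM m (y*b)) =
      if b = 0 then ((2:ℤ)^m) else 0 := by
  by_cases hb0 : b = 0
  · subst hb0
    rw [if_pos rfl]
    rw [Finset.sum_congr rfl (fun y _ => by rw [mul_zero, trM_zero, eps_zero])]
    rw [Finset.sum_const, cardK hm hcard hmc]
    push_cast; ring
  · rw [if_neg hb0]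
    obtain ⟨y1, hy1K, hy1⟩ := trM_exists_one hm hcard hmc
    set c := y1 * b⁻¹ with hc
    have hcK : c^(2^m) = c := by
      rw [hc, mul_pow, hy1K, inv_pow, hb]
    set S := ∑ y ∈ (univ : Finset F).filter (fun y : F => y^(2^m) = y), eps (trM m (y*b)) with hS
    have hmem : ∀ y ∈ (univ : Finset F).filter (fun y : F => y^(2^m) = y),
        y + c ∈ (univ : Finset F).filter (fun y : F => y^(2^m) = y) := by
      intro y hy
      rw [Finset.mem_filter] at hy ⊢
      exact ⟨Finset.mem_univ _, by rw [bar_add, hy.2, hcK]⟩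
    have hinv : ∀ (y : F), y + c + c = y := by
      intro y; rw [add_assoc, add_self, add_zero]
    have reind : S = ∑ y ∈ (univ : Finset F).filter (fun y : F => y^(2^m) = y),
        eps (trM m ((y + c) * b)) := by
      rw [hS]
      exact Finset.sum_nbij' (i := fun y => y + c) (j := fun y => y + c)
        hmem hmem (fun y _ => hinv y) (fun y _ => hinv y)
        (fun y _ => by rw [hinv])
    have e1 : ∑ y ∈ (univ : Finset F).filter (fun y : F => y^(2^m) = y),
        eps (trM m ((y + c) * b)) = ∑ y ∈ (univ : Finset F).filter (fun y : F => y^(2^m) = y),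
        -eps (trM m (y * b)) := by
      refine Finset.sum_congr rfl fun y hy => ?_
      rw [Finset.mem_filter] at hy
      have hyb : (y*b)^(2^m) = y*b := by rw [mul_pow, hy.2, hb]
      have hexp : (y + c) * b = y*b + y1 := by
        rw [hc]; field_simp
      rw [hexp, trM_add, hy1, eps_mul (trM01 _ hyb) (Or.inr rfl)]
      have : eps (1:F) = -1 := if_neg one_ne_zero
      rw [this]; ring
    have key : S = -S := reind.trans (e1.trans (Finset.sum_neg_distrib _))
    omega
end Char


section Main
variable {F : Type*} [Field F] [Fintype F] [DecidableEq F] [CharP F 2] {m : ℕ}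

lemma quad_card (A B : F) :
    ((univ : Finset F).filter (fun u : F => A*u^2 + u + B = 0 ∧ u ≠ 0)).card ≤ 2 := by
  set S := (univ : Finset F).filter (fun u : F => A*u^2 + u + B = 0 ∧ u ≠ 0) with hS
  by_cases hA : A = 0
  · have : S ⊆ {B} := by
      intro u hu
      rw [hS, Finset.mem_filter] at hu
      have : u = B := by
        apply eq_of_add_eq_zero'
        have := hu.2.1
        rw [hA] at this
        linear_combination this
      simp [this]
    calc S.card ≤ _ := Finset.card_le_card this
      _ ≤ 2 := by simp
  · rcases Finset.eq_empty_or_nonempty S with h | ⟨u1, hu1⟩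
    · simp [h]
    · have hsub : S ⊆ {u1, u1 + A⁻¹} := by
        intro u2 hu2
        rw [hS, Finset.mem_filter] at hu2
        have h1 := (Finset.mem_filter.mp hu1).2.1
        have h2 := hu2.2.1
        by_cases heq : u2 = u1
        · simp [heq]
        · have hne : u1 + u2 ≠ 0 := fun h => heq (eq_of_add_eq_zero' h).symm
          have hsq : A * (u1 + u2)^2 = u1 + u2 := by
            have e1 : (u1+u2)^2 = u1^2 + u2^2 := add_pow_char ..
            rw [e1]
            linear_combination h1 + h2 + add_self (u2 + B) + (-u1 - 2*u2 - 2*B) * (two_zero (F := F))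
          have key : A * (u1 + u2) = 1 :=
            mul_right_cancel₀ hne (by linear_combination hsq : A * (u1+u2) * (u1+u2) = 1 * (u1+u2))
          have hA' : A⁻¹ = u1 + u2 := inv_eq_of_mul_eq_one_right key
          have : u2 = u1 + A⁻¹ := by
            rw [hA', ← add_assoc, add_self, zero_add]
          simp [this]
      calc S.card ≤ _ := Finset.card_le_card hsub
        _ ≤ 2 := Finset.card_insert_le _ _ |>.trans (by simp)

lemma key_pointwise (hmc : ∀ x : F, x ^ (2^(2*m)) = x)
    (l μ : F) (hl : l + l ^ (2 ^ m) = 1) (a u y : F)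
    (hu : u^(2^m+1) = 1) (hy : y^(2^m) = y) (hy0 : y ≠ 0) :
    fFun m l μ (u*y) + trN m (a*(u*y)) =
      trM m (y * (1 + (u+u⁻¹) * trN m (μ * (u⁻¹)^2) + (a*u + a^(2^m)*u⁻¹))) := by
  have hu0 : u ≠ 0 := by rintro rfl; simp at hu
  have hubar : u^(2^m) = u⁻¹ := by
    apply eq_inv_of_mul_eq_one_left
    rw [← pow_succ, hu]
  have hx1 : (u*y)^(2^m+1) = y^2 := by
    rw [pow_succ, mul_pow, hubar, hy]
    field_simp
  have hysq : (y^2)^(2^m) = y^2 := by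
    rw [← pow_mul, mul_comm, pow_mul, hy]
  have h1 : trN m (l * (u*y)^(2^m+1)) = trM m (y^2) := by
    rw [hx1, trN_eq_trM]
    congr 1
    rw [mul_pow, hysq]
    linear_combination (y^2) * hl
  have h2 : trN m (u*y) = trM m (y * (u + u⁻¹)) := by
    rw [trN_eq_trM]
    congr 1
    rw [mul_pow, hubar, hy]
    ring
  have h3 : (u*y)^(2^m - 1) = (u⁻¹)^2 := by
    have hx0 : u*y ≠ 0 := mul_ne_zero hu0 hy0
    have hc : (u*y)^(2^m - 1) * (u*y)^2 = (u⁻¹)^2 * (u*y)^2 := by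
      rw [← pow_add]
      have : 2^m - 1 + 2 = 2^m + 1 := by
        have : 1 ≤ 2^m := Nat.one_le_two_pow
        omega
      rw [this, hx1]
      field_simp
    exact mul_right_cancel₀ (pow_ne_zero 2 hx0) hc
  have h4 : trN m (a*(u*y)) = trM m (y * (a*u + a^(2^m) * u⁻¹)) := by
    rw [trN_eq_trM]
    congr 1
    rw [mul_pow, mul_pow, hubar, hy]
    ring
  show trN m (l * (u*y)^(2^m+1)) + trN m (u*y) * trN m (μ * (u*y)^(2^m-1))
      + trN m (a*(u*y)) = _
  rw [h1, h2, h3, h4]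
  set δ : F := trN m (μ * (u⁻¹)^2) with hδ
  set c : F := u + u⁻¹ with hc
  set b : F := a*u + a^(2^m)*u⁻¹ with hb
  have E2 : trM m (y*c*δ) = trM m (y*c) * δ := by
    rcases trN01 hmc (μ * (u⁻¹)^2) with h | h <;> rw [← hδ] at h <;> rw [h]
    · rw [mul_zero, trM_zero, mul_zero]
    · rw [mul_one, mul_one]
  have E1 : trM m (y^2) = trM m y := trM_frob y hy
  have H0 : trM m (y * (1 + c*δ + b)) = trM m (y + y*c*δ + y*b) := by
    congr 1; ring
  have A1 : trM m (y + y*c*δ + y*b) = trM m (y + y*c*δ) + trM m (y*b) := trM_add ..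
  have A2 : trM m (y + y*c*δ) = trM m y + trM m (y*c*δ) := trM_add ..
  linear_combination E1 - E2 - H0 - A1 - A2
end Main


section Main2
variable {F : Type*} [Field F] [Fintype F] [DecidableEq F] [CharP F 2] {m : ℕ}

lemma walsh_bound (hm : 0 < m) (hcard : Fintype.card F = 2 ^ (2*m))
    (l μ : F) (hl : l + l ^ (2 ^ m) = 1) (a : F) :
    |walsh m (fFun m l μ) a| ≤ 3 * 2 ^ m := by
  classical
  have hmc : ∀ x : F, x ^ (2^(2*m)) = x := fun x => by
    rw [← hcard]; exact FiniteField.pow_card x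
  have hq1 : (1:ℕ) ≤ 2^m := Nat.one_le_two_pow
  have hq2 : (2:ℕ) ≤ 2^m := by
    calc (2:ℕ) = 2^1 := (pow_one 2).symm
    _ ≤ 2^m := Nat.pow_le_pow_right (by norm_num) hm
  -- notation
  set Kf := (univ : Finset F).filter (fun y : F => y^(2^m) = y) with hKf
  set Ks := (univ : Finset F).filter (fun y : F => y^(2^m) = y ∧ y ≠ 0) with hKs
  set Uf := (univ : Finset F).filter (fun u : F => u^(2^m+1) = 1) with hUf
  have hubarf : ∀ u : F, u^(2^m+1) = 1 → u^(2^m) = u⁻¹ := by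
    intro u hu
    apply eq_inv_of_mul_eq_one_left
    rw [← pow_succ, hu]
  have hu0f : ∀ u : F, u^(2^m+1) = 1 → u ≠ 0 := by
    rintro u hu rfl; simp at hu
  -- the square root function
  set σ : F → F := fun t => t^(2^(2*m-1)) with hσdef
  have hσ : ∀ t : F, (σ t)^2 = t := by
    intro t
    rw [hσdef]
    show (t^(2^(2*m-1)))^2 = t
    rw [← pow_mul, ← pow_succ]
    have : 2*m - 1 + 1 = 2*m := by omega
    rw [this, hmc]
  have hσy : ∀ y : F, σ (y^2) = y := fun y => sq_inj (by rw [hσ])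
  -- e function
  set e : F → F := fun u => 1 + (u+u⁻¹) * trN m (μ * (u⁻¹)^2) + (a*u + a^(2^m)*u⁻¹)
    with he
  have heK : ∀ u : F, u^(2^m+1) = 1 → (e u)^(2^m) = e u := by
    intro u hu
    have hubar := hubarf u hu
    have hiu : (u⁻¹)^(2^m) = u := by
      rw [inv_pow, hubar, inv_inv]
    have hδ01 := trN01 hmc (μ * (u⁻¹)^2)
    have hδ : (trN m (μ * (u⁻¹)^2))^(2^m) = trN m (μ * (u⁻¹)^2) := by
      rcases hδ01 with h | h <;> rw [h] <;> simp
    rw [he]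
    show (1 + (u+u⁻¹) * trN m (μ * (u⁻¹)^2) + (a*u + a^(2^m)*u⁻¹))^(2^m) = _
    have hma : (a^(2^m))^(2^m) = a := by
      rw [← pow_mul, ← pow_add, ← two_mul, hmc]
    simp only [bar_add, mul_pow, one_pow, hubar, hiu, hδ, hma]
    ring
  have hmma : ∀ x : F, (x^(2^m))^(2^m) = x := fun x => by
    rw [← pow_mul, ← pow_add, ← two_mul, hmc]
  -- step A : split off x = 0
  have h00 : fFun m l μ 0 + trN m (a*(0:F)) = 0 := by
    have e1 : (2^m+1) ≠ 0 := by omega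
    have e2 : (2^m-1) ≠ 0 := by omega
    show trN m (l * 0 ^ (2^m+1)) + trN m 0 * trN m (μ * 0 ^ (2^m-1)) + trN m (a*0) = 0
    rw [zero_pow e1, zero_pow e2, mul_zero, mul_zero, mul_zero, trN_zero]
    ring
  set G : F → ℤ := fun x => eps (fFun m l μ x + trN m (a*x)) with hG
  have hsplit : walsh m (fFun m l μ) a = 1 + ∑ x ∈ (univ : Finset F).erase 0, G x := by
    have h := (Finset.add_sum_erase (univ : Finset F) G (Finset.mem_univ 0)).symm
    rw [hG] at h
    simp only at h
    rw [h00, eps_zero] at h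
    exact h
  -- step B : reindexing
  set bwd : F → F × F := fun x => (x * (σ (x^(2^m) * x))⁻¹, σ (x^(2^m) * x)) with hbwd
  have hbwdmem : ∀ x ∈ (univ : Finset F).erase 0, bwd x ∈ Uf ×ˢ Ks := by
    intro x hx
    have hx0 : x ≠ 0 := (Finset.mem_erase.mp hx).1
    have hy2 : (σ (x^(2^m) * x))^2 = x^(2^m)*x := hσ _
    set y := σ (x^(2^m) * x) with hy
    have hy0 : y ≠ 0 := by
      intro h
      rw [h] at hy2
      exact (mul_ne_zero (pow_ne_zero _ hx0) hx0) (by rw [← hy2]; ring)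
    have hyK : y^(2^m) = y := by
      have h1 : (y^(2^m))^2 = (y^2)^(2^m) := pow_comm' y (2^m) 2
      have h2 : (y^2)^(2^m) = y^2 := by
        rw [hy2, mul_pow, hmma]
        exact mul_comm x _
      exact sq_inj (h1.trans h2)
    have huU : (x*y⁻¹)^(2^m+1) = 1 := by
      have hyy : y^(2^m+1) = y^2 := by
        rw [pow_succ, hyK, sq]
      rw [mul_pow, inv_pow, hyy, hy2, pow_succ]
      field_simp
    rw [Finset.mem_product]
    constructor
    · rw [hUf, Finset.mem_filter]; exact ⟨Finset.mem_univ _, huU⟩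
    · rw [hKs, Finset.mem_filter]; exact ⟨Finset.mem_univ _, hyK, hy0⟩
  have hprodmem : ∀ p ∈ Uf ×ˢ Ks, p.1 * p.2 ∈ (univ : Finset F).erase 0 := by
    intro p hp
    rw [Finset.mem_product, hUf, hKs, Finset.mem_filter, Finset.mem_filter] at hp
    rw [Finset.mem_erase]
    exact ⟨mul_ne_zero (hu0f _ hp.1.2) hp.2.2.2, Finset.mem_univ _⟩
  have hfb : ∀ x ∈ (univ : Finset F).erase 0, (bwd x).1 * (bwd x).2 = x := by
    intro x hx
    have hx0 : x ≠ 0 := (Finset.mem_erase.mp hx).1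
    have hy2 : (σ (x^(2^m) * x))^2 = x^(2^m)*x := hσ _
    have hy0 : σ (x^(2^m) * x) ≠ 0 := by
      intro h
      rw [h] at hy2
      exact (mul_ne_zero (pow_ne_zero _ hx0) hx0) (by rw [← hy2]; ring)
    rw [hbwd]
    simp only
    field_simp
    rw [mul_comm x]; exact div_self hy0
  have hbf : ∀ p ∈ Uf ×ˢ Ks, bwd (p.1 * p.2) = p := by
    intro p hp
    rw [Finset.mem_product, hUf, hKs, Finset.mem_filter, Finset.mem_filter] at hp
    have hu := hp.1.2
    have hyK := hp.2.2.1
    have hy0 := hp.2.2.2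
    have hu0 := hu0f _ hu
    have ht : (p.1*p.2)^(2^m) * (p.1*p.2) = p.2^2 := by
      rw [mul_pow, hubarf _ hu, hyK]
      field_simp
    rw [hbwd]
    simp only
    rw [ht, hσy]
    have : p.1 * p.2 * p.2⁻¹ = p.1 := by field_simp
    rw [this]
  have hsum_all : ∀ f : F → ℤ, ∑ x ∈ (univ : Finset F).erase 0, f x
      = ∑ p ∈ Uf ×ˢ Ks, f (p.1 * p.2) := by
    intro f
    exact Finset.sum_nbij' (i := bwd) (j := fun p => p.1 * p.2) hbwdmem hprodmem
      hfb hbf (fun x hx => by rw [hfb x hx])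
  -- step C/D : inner sums
  have h0K : (0:F) ∈ Kf := by
    rw [hKf, Finset.mem_filter]
    exact ⟨Finset.mem_univ _, by rw [zero_pow (by positivity)]⟩
  have hKserase : Ks = Kf.erase 0 := by
    ext y
    rw [hKs, hKf, Finset.mem_erase, Finset.mem_filter, Finset.mem_filter]
    tauto
  have hinner : ∀ u ∈ Uf, ∑ y ∈ Ks, G (u*y) = (if e u = 0 then ((2:ℤ)^m) else 0) - 1 := by
    intro u hu
    rw [hUf, Finset.mem_filter] at hu
    have hpoint : ∀ y ∈ Ks, G (u*y) = eps (trM m (y * e u)) := by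
      intro y hy
      rw [hKs, Finset.mem_filter] at hy
      rw [hG]
      simp only
      rw [key_pointwise hmc l μ hl a u y hu.2 hy.2.1 hy.2.2]
    rw [Finset.sum_congr rfl hpoint, hKserase]
    have hsume := Finset.add_sum_erase Kf (fun y => eps (trM m (y * e u))) h0K
    rw [zero_mul, trM_zero, eps_zero] at hsume
    have hKsum := sum_eps_K hm hcard hmc (e u) (heK u hu.2)
    rw [← hKf] at hKsum
    rw [hKsum] at hsume
    linarith [hsume]
  -- step E : outer sum
  set N := (Uf.filter (fun u => e u = 0)).card with hN
  have houter : ∑ u ∈ Uf, ((if e u = 0 then ((2:ℤ)^m) else 0) - 1)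
      = 2^m * (N : ℤ) - (Uf.card : ℤ) := by
    rw [Finset.sum_sub_distrib, Finset.sum_const, ← Finset.sum_filter, Finset.sum_const, hN]
    push_cast
    ring
  -- step F : cardinalities
  have hcerase : (((univ : Finset F).erase 0).card : ℤ) = 2^(2*m) - 1 := by
    rw [Finset.card_erase_of_mem (Finset.mem_univ 0), Finset.card_univ, hcard]
    have : (1:ℕ) ≤ 2^(2*m) := Nat.one_le_two_pow
    push_cast [this]
    ring
  have hcKs : ((Ks.card : ℤ)) = 2^m - 1 := by
    rw [hKserase, Finset.card_erase_of_mem h0K, hKf, cardK hm hcard hmc]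
    push_cast [hq1]
    ring
  have hcprod : (((univ : Finset F).erase 0).card : ℤ) = (Uf.card : ℤ) * (Ks.card : ℤ) := by
    have h1 := hsum_all (fun _ => (1:ℤ))
    rw [Finset.sum_const, Finset.sum_const, Finset.card_product, nsmul_eq_mul, nsmul_eq_mul,
      mul_one, mul_one] at h1
    push_cast at h1
    linarith [h1]
  have hUcard : (Uf.card : ℤ) = 2^m + 1 := by
    have hne : ((2:ℤ)^m - 1) ≠ 0 := by
      have : (2:ℤ) ≤ 2^m := by exact_mod_cast hq2
      linarith
    apply mul_right_cancel₀ hne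
    rw [← hcKs]
    rw [← hcprod, hcerase, hcKs]
    have : (2:ℤ)^(2*m) = 2^m * 2^m := by rw [two_mul, pow_add]
    rw [this]
    ring
  -- step G : final formula
  have hW : walsh m (fFun m l μ) a = 2^m * (N : ℤ) - 2^m := by
    rw [hsplit, hsum_all G, Finset.sum_product]
    calc 1 + ∑ u ∈ Uf, ∑ y ∈ Ks, G (u * y)
        = 1 + ∑ u ∈ Uf, ((if e u = 0 then ((2:ℤ)^m) else 0) - 1) := by
          rw [Finset.sum_congr rfl hinner]
      _ = 1 + (2^m * (N : ℤ) - (Uf.card : ℤ)) := by rw [houter]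
      _ = 2^m * (N : ℤ) - 2^m := by rw [hUcard]; ring
  -- step H : N ≤ 4
  have hN4 : N ≤ 4 := by
    set T0 := (univ : Finset F).filter (fun u : F => a*u^2 + u + a^(2^m) = 0 ∧ u ≠ 0) with hT0
    set T1 := (univ : Finset F).filter
      (fun u : F => (a+1)*u^2 + u + (a^(2^m)+1) = 0 ∧ u ≠ 0) with hT1
    have hsub : Uf.filter (fun u => e u = 0) ⊆ T0 ∪ T1 := by
      intro u hu
      rw [Finset.mem_filter, hUf, Finset.mem_filter] at hu
      obtain ⟨⟨-, huu⟩, hue0⟩ := hu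
      have hu0 : u ≠ 0 := hu0f _ huu
      have hue : u * e u = 0 := by rw [hue0, mul_zero]
      have hexp : u * e u = u + (u^2+1) * trN m (μ*(u⁻¹)^2) + (a*u^2 + a^(2^m)) := by
        rw [he]
        simp only
        field_simp
      rcases trN01 hmc (μ * (u⁻¹)^2) with hδ | hδ <;> rw [hδ] at hexp
      · apply Finset.mem_union_left
        rw [hT0, Finset.mem_filter]
        exact ⟨Finset.mem_univ _, by linear_combination hue - hexp, hu0⟩
      · apply Finset.mem_union_right
        rw [hT1, Finset.mem_filter]
        exact ⟨Finset.mem_univ _, by linear_combination hue - hexp, hu0⟩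
    calc N ≤ (T0 ∪ T1).card := Finset.card_le_card hsub
      _ ≤ T0.card + T1.card := Finset.card_union_le _ _
      _ ≤ 2 + 2 := Nat.add_le_add (quad_card a (a^(2^m))) (quad_card (a+1) (a^(2^m)+1))
      _ ≤ 4 := by norm_num
  rw [hW, abs_le]
  have hqZ : (2:ℤ) ≤ 2^m := by exact_mod_cast hq2
  have hN4' : ((N:ℤ)) ≤ 4 := by exact_mod_cast hN4
  have hN0 : (0:ℤ) ≤ (N:ℤ) := Int.ofNat_nonneg N
  constructor <;> nlinarith [hqZ, hN4', hN0]
end Main2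

theorem stmt9 (m : ℕ) (hm : 0 < m) (F : Type*) [Field F] [Fintype F] [DecidableEq F]
    (hcard : Fintype.card F = 2 ^ (2 * m))
    (l : F) (hl : l + l ^ (2 ^ m) = 1)
    (μ : F) (hμK : μ ^ (2 ^ m) = μ) (hμ0 : μ ≠ 0) :
    (∀ a : F, |walsh m (fFun m l μ) a| ≤ 3 * 2 ^ m) ∧
    ((2 : ℚ) ^ (2 * m - 1) - (1 / 2) *
        ((Finset.univ.sup' ⟨(0 : F), Finset.mem_univ 0⟩
          (fun a : F => |walsh m (fFun m l μ) a|) : ℤ) : ℚ) ≥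
      (2 : ℚ) ^ (2 * m - 1) - 3 * 2 ^ (m - 1)) := by
  haveI : CharP F 2 := charF hm hcard
  have hb : ∀ a : F, |walsh m (fFun m l μ) a| ≤ 3 * 2 ^ m := fun a =>
    walsh_bound hm hcard l μ hl a
  refine ⟨hb, ?_⟩
  set S : ℤ := Finset.univ.sup' ⟨(0 : F), Finset.mem_univ 0⟩
    (fun a : F => |walsh m (fFun m l μ) a|) with hS
  have hsup : S ≤ 3 * 2^m := Finset.sup'_le _ _ (fun a _ => hb a)
  have hcast : ((S : ℚ)) ≤ 3 * 2^m := by exact_mod_cast hsup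
  have h2m : (2:ℚ) * 2^(m-1) = 2^m := by
    rw [← pow_succ']
    congr 1
    omega
  have hhalf : (1/2:ℚ) * (S : ℚ) ≤ 3 * 2^(m-1) := by linarith
  linarith
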